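/- For all j ≥ 1, the positions of symbols in the Narayana word n' (indexed from 1) satisfy: p_{02}(j) = [(j−1)_N 0]_N + 1, p_0(j) = [(j−1)_N 00]_N + 1, p_1(j) = [(j−1)_N 000]_N + 2 = p_0(j) + j, and p_2(j) = [(j−1)_N 0000]_N + 3 = p_1(j) + p_{02}(j). -/

import Mathlib

def nu : Fin 3 → List (Fin 3) := fun a => if a = 0 then [0, 1] else if a = 1 then [2] else [0]

def nuPow (k : ℕ) : List (Fin 3) := (fun w => w.flatMap nu)^[k] [0]


def nara : ℕ → ℕ
  | 0 => 1
  | 1 => 2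
  | 2 => 3
  | (i+3) => nara (i+2) + nara i


def NaraRep (F : Finset ℕ) (m : ℕ) : Prop :=
  (∑ f ∈ F, nara f) = m ∧ ∀ a ∈ F, ∀ b ∈ F, a < b → a + 3 ≤ b


def nword (i : ℕ) : Fin 3 := (nuPow (i+2)).getD i 0


/-- \`x\` is the position (counting from 1) of the \`j\`-th position satisfying \`P\`
among positions \`1, 2, 3, …\`. -/
def OccPos (P : ℕ → Prop) (j x : ℕ) : Prop :=
  1 ≤ x ∧ P x ∧ {y | 1 ≤ y ∧ y ≤ x ∧ P y}.ncard = j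


set_option linter.unreachableTactic false
set_option linter.unusedTactic false



example : nuPow 3 = nuPow 2 ++ nuPow 0 := by decide
example : (nuPow 4).count 0 = 3 := by decide
lemma flatMap_iter_append (k : ℕ) (u v : List (Fin 3)) :
    (fun w => w.flatMap nu)^[k] (u ++ v) = (fun w => w.flatMap nu)^[k] u ++ (fun w => w.flatMap nu)^[k] v := by
  induction k generalizing u v with
  | zero => simp
  | succ n ih => rw [Function.iterate_succ_apply, Function.iterate_succ_apply]; simp [List.flatMap_append, ih]

lemma nuPow_add_three (k : ℕ) : nuPow (k+3) = nuPow (k+2) ++ nuPow k := by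
  have h3 : nuPow 3 = nuPow 2 ++ nuPow 0 := by decide
  have : nuPow (k+3) = (fun w => w.flatMap nu)^[k] (nuPow 3) := by
    rw [nuPow, nuPow, ← Function.iterate_add_apply]
  rw [this, h3, flatMap_iter_append]
  congr 1 <;> rw [nuPow, nuPow, ← Function.iterate_add_apply]

lemma nuPow_len : ∀ k, (nuPow k).length = nara k
  | 0 => rfl
  | 1 => rfl
  | 2 => rfl
  | (k+3) => by
      rw [nuPow_add_three, List.length_append, nuPow_len (k+2), nuPow_len k]; rfl

lemma nuPow_prefix_succ (k : ℕ) : nuPow k <+: nuPow (k+1) := by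
  induction k with
  | zero => exact ⟨[1], rfl⟩
  | succ n ih =>
    obtain ⟨t, ht⟩ := ih
    refine ⟨t.flatMap nu, ?_⟩
    rw [nuPow, nuPow, Function.iterate_succ_apply', Function.iterate_succ_apply',
      ← List.flatMap_append]
    show ((nuPow n ++ t).flatMap nu) = _
    rw [ht]; rfl

lemma nuPow_mono {k m : ℕ} (h : k ≤ m) : nuPow k <+: nuPow m := by
  induction m with
  | zero => simp_all
  | succ n ih =>
    rcases Nat.lt_or_ge k (n+1) with h' | h'
    · exact (ih (Nat.lt_succ_iff.mp h')).trans (nuPow_prefix_succ n)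
    · have : k = n + 1 := le_antisymm h h'
      subst this; exact List.prefix_refl _

lemma nara_ge : ∀ k, k + 1 ≤ nara k
  | 0 => le_refl _
  | 1 => by simp [nara]
  | 2 => by simp [nara]
  | (k+3) => by
      have h1 := nara_ge (k+2)
      have h2 := nara_ge k
      show k + 4 ≤ nara (k+2) + nara k
      omega

def p02 : Fin 3 → Bool := fun a => a = 0 || a = 2

lemma count0_nuPow : ∀ k, (nuPow (k+2)).count 0 = nara k
  | 0 => by decide
  | 1 => by decide
  | 2 => by decide
  | (k+3) => by
      rw [show k+3+2 = (k+2)+3 by ring, nuPow_add_three, List.count_append,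
        show k+2+2 = (k+2)+2 by ring, count0_nuPow (k+2), count0_nuPow k]; rfl

lemma count1_nuPow : ∀ k, (nuPow (k+3)).count 1 = nara k
  | 0 => by decide
  | 1 => by decide
  | 2 => by decide
  | (k+3) => by
      rw [show k+3+3 = (k+3)+3 by ring, nuPow_add_three,  List.count_append,
        count1_nuPow (k+2), count1_nuPow k]; rfl

lemma count2_nuPow : ∀ k, (nuPow (k+4)).count 2 = nara k
  | 0 => by decide
  | 1 => by decide
  | 2 => by decide
  | (k+3) => by
      rw [show k+3+4 = (k+4)+3 by ring, nuPow_add_three, List.count_append,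
        count2_nuPow (k+2), count2_nuPow k]; rfl

lemma count02_nuPow : ∀ k, (nuPow (k+1)).countP p02 = nara k
  | 0 => by decide
  | 1 => by decide
  | 2 => by decide
  | (k+3) => by
      rw [show k+3+1 = (k+1)+3 by ring, nuPow_add_three, List.countP_append,
        count02_nuPow (k+2), count02_nuPow k]; rfl


lemma prefix_append_left {s u w : List (Fin 3)} (h : u <+: w) : s ++ u <+: s ++ w := by
  obtain ⟨t, ht⟩ := h
  exact ⟨t, by rw [List.append_assoc, ht]⟩

lemma nuPow_succ_eq (e : ℕ) (he : 2 ≤ e) : nuPow (e+1) = nuPow e ++ nuPow (e-2) := by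
  obtain ⟨m, rfl⟩ := Nat.exists_eq_add_of_le he
  have := nuPow_add_three m
  rw [show 2 + m + 1 = m + 3 by ring, this, show 2 + m = m + 2 by ring, show m + 2 - 2 = m by omega]

lemma prefix_P : ∀ (L : List ℕ) (e t : ℕ), List.Chain (fun a b => b + 3 ≤ a) e L →
    t + 2 ≤ (e :: L).getLast (by simp) →
    ((e :: L).flatMap nuPow) ++ nuPow t <+: nuPow (e + 1) := by
  intro L
  induction L with
  | nil =>
    intro e t _ hlast
    simp only [List.getLast_singleton] at hlast
    have he : 2 ≤ e := by omega
    rw [nuPow_succ_eq e he]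
    simp only [List.flatMap_cons, List.flatMap_nil, List.append_nil]
    exact prefix_append_left (nuPow_mono (by omega))
  | cons e' L' ih =>
    intro e t hchain hlast
    rw [List.Chain, List.isChain_cons_cons] at hchain
    have hgap : e' + 3 ≤ e := hchain.1
    have hlast' : t + 2 ≤ (e' :: L').getLast (by simp) := by
      rwa [List.getLast_cons (by simp)] at hlast
    have hih := ih e' t hchain.2 hlast'
    have he : 2 ≤ e := by omega
    rw [nuPow_succ_eq e he]
    have h2 : (e' :: L').flatMap nuPow ++ nuPow t <+: nuPow (e - 2) :=
      hih.trans (nuPow_mono (by omega))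
    calc (e :: e' :: L').flatMap nuPow ++ nuPow t
        = nuPow e ++ ((e' :: L').flatMap nuPow ++ nuPow t) := by
          simp [List.flatMap_cons, List.append_assoc]
      _ <+: nuPow e ++ nuPow (e - 2) := prefix_append_left h2

lemma nword_eq (m i : ℕ) (h : i < (nuPow m).length) : (nuPow m).getD i 0 = nword i := by
  have h2 : i < (nuPow (i+2)).length := by
    rw [nuPow_len]; have := nara_ge (i+2); omega
  rcases Nat.le_total m (i+2) with hle | hle
  · obtain ⟨t, ht⟩ := nuPow_mono hle
    rw [nword, ← ht, List.getD_eq_getElem _ _ h, List.getD_eq_getElem _ _ (by simp [← ht] at h2 ⊢; omega)]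
    rw [List.getElem_append_left h]
  · obtain ⟨t, ht⟩ := nuPow_mono hle
    rw [nword, ← ht, List.getD_eq_getElem _ _ (by rw [← ht] at h; exact h), List.getD_eq_getElem _ _ h2]
    rw [List.getElem_append_left h2]


lemma filter_range_countP (p : Fin 3 → Bool) :
    ∀ W : List (Fin 3),
      ((Finset.range W.length).filter (fun i => p (W.getD i (0 : Fin 3)) = true)).card = W.countP p := by
  intro W
  induction W using List.reverseRecOn with
  | nil => simp
  | append_singleton W a ih =>
    rw [List.countP_append, List.length_append, List.length_singleton,
      Finset.range_add_one, Finset.filter_insert]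
    have hfilt : (Finset.range W.length).filter (fun i => p ((W ++ [a]).getD i 0) = true)
        = (Finset.range W.length).filter (fun i => p (W.getD i 0) = true) := by
      apply Finset.filter_congr
      intro i hi
      rw [Finset.mem_range] at hi
      rw [List.getD_eq_getElem _ _ (by simp; omega), List.getD_eq_getElem _ _ hi,
        List.getElem_append_left hi]
    have hlastD : (W ++ [a]).getD W.length 0 = a := by
      rw [List.getD_eq_getElem _ _ (by simp), List.getElem_append_right (le_refl _)]
      simp
    rw [hfilt, hlastD]
    by_cases hp : p a = true
    · rw [if_pos hp, Finset.card_insert_of_notMem (by simp), ih]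
      simp [hp]
    · rw [if_neg hp, ih]
      simp [hp]

lemma ncard_pos_eq (x : ℕ) (hx : 1 ≤ x) (p : Fin 3 → Bool) :
    {y | 1 ≤ y ∧ y ≤ x ∧ p (nword (y - 1)) = true}.ncard
      = ((Finset.range x).filter (fun i => p (nword i) = true)).card := by
  have hset : {y | 1 ≤ y ∧ y ≤ x ∧ p (nword (y - 1)) = true}
      = ↑((Finset.Icc 1 x).filter (fun y => p (nword (y - 1)) = true)) := by
    ext y; simp [Finset.mem_Icc, and_assoc]
  rw [hset, Set.ncard_coe_finset]
  have hIcc : Finset.Icc 1 x = (Finset.range x).image (· + 1) := by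
    ext y; simp only [Finset.mem_Icc, Finset.mem_image, Finset.mem_range]
    constructor
    · rintro ⟨h1, h2⟩; exact ⟨y - 1, by omega, by omega⟩
    · rintro ⟨i, hi, rfl⟩; omega
  rw [hIcc, Finset.filter_image, Finset.card_image_of_injective _ (add_left_injective 1)]
  congr 1

lemma main_occ (p : Fin 3 → Bool) (W : List (Fin 3)) (m j : ℕ)
    (hpre : W <+: nuPow m)
    (hlen : 1 ≤ W.length)
    (hcount : W.countP p = j)
    (hlast : p (W.getD (W.length - 1) 0) = true) :
    OccPos (fun y => p (nword (y - 1)) = true) j W.length := by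
  have hW : ∀ i, i < W.length → W.getD i 0 = nword i := by
    intro i hi
    obtain ⟨t, ht⟩ := hpre
    have hm : i < (nuPow m).length := by rw [← ht]; simp; omega
    rw [← nword_eq m i hm, ← ht, List.getD_eq_getElem _ _ hi,
      List.getD_eq_getElem _ _ (by rw [← ht] at hm; exact hm), List.getElem_append_left hi]
  refine ⟨hlen, ?_, ?_⟩
  · show p (nword (W.length - 1)) = true
    rw [← hW _ (by omega)]; exact hlast
  · show ({y | 1 ≤ y ∧ y ≤ W.length ∧ p (nword (y - 1)) = true}).ncard = j
    rw [ncard_pos_eq _ hlen]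
    have hcg : (Finset.range W.length).filter (fun i => p (nword i) = true)
        = (Finset.range W.length).filter (fun i => p (W.getD i 0) = true) := by
      apply Finset.filter_congr
      intro i hi
      rw [Finset.mem_range] at hi
      rw [hW i hi]
    rw [hcg, filter_range_countP, hcount]

lemma flatMap_length (g : ℕ → List (Fin 3)) : ∀ R : List ℕ,
    (R.flatMap g).length = (R.map (fun f => (g f).length)).sum := by
  intro R
  induction R with
  | nil => simp
  | cons a R ih => simp [List.flatMap_cons, ih]

lemma flatMap_countP (g : ℕ → List (Fin 3)) (p : Fin 3 → Bool) : ∀ R : List ℕ,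
    (R.flatMap g).countP p = (R.map (fun f => (g f).countP p)).sum := by
  intro R
  induction R with
  | nil => simp
  | cons a R ih => simp [List.flatMap_cons, List.countP_append, ih]

lemma sort_rev_sum (G : Finset ℕ) (h : ℕ → ℕ) :
    (((G.sort (· ≤ ·)).reverse).map h).sum = ∑ f ∈ G, h f := by
  rw [List.map_reverse, List.sum_reverse]
  have hperm : List.Perm (G.sort (· ≤ ·)) G.toList := Finset.sort_perm_toList _ _
  rw [List.Perm.sum_eq (hperm.map h), Finset.sum_map_toList]

lemma word_prefix_wrap (E : List ℕ) (t : ℕ)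
    (hp : E.Pairwise (fun a b => b + 3 ≤ a))
    (hge : ∀ e ∈ E, t + 2 ≤ e) :
    ∃ m, E.flatMap nuPow ++ nuPow t <+: nuPow m := by
  cases E with
  | nil => exact ⟨t, by simp⟩
  | cons e L =>
    refine ⟨e + 1, prefix_P L e t ?_ ?_⟩
    · exact hp.isChain
    · exact hge _ (List.getLast_mem _)


lemma case_builder (G : Finset ℕ) (hgap : ∀ a ∈ G, ∀ b ∈ G, a < b → a + 3 ≤ b)
    (c t : ℕ) (hct : ∀ f ∈ G, t + 2 ≤ f + c) (p : Fin 3 → Bool) (j : ℕ)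
    (hcnt : (∑ f ∈ G, (nuPow (f + c)).countP p) + (nuPow t).countP p = j)
    (hlast : p ((nuPow t).getD ((nuPow t).length - 1) 0) = true) :
    OccPos (fun y => p (nword (y - 1)) = true) j ((∑ f ∈ G, nara (f + c)) + nara t) := by
  classical
  set R : List ℕ := (G.sort (· ≤ ·)).reverse with hR
  set E : List ℕ := R.map (· + c) with hE
  have hmemR : ∀ f ∈ R, f ∈ G := by
    intro f hf; rw [hR, List.mem_reverse] at hf; exact (Finset.mem_sort _).mp hf
  have hpairR : R.Pairwise (fun a b => b + 3 ≤ a) := by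
    rw [hR, List.pairwise_reverse]
    have hs : (G.sort (· ≤ ·)).Pairwise (· < ·) := List.sortedLT_iff_pairwise.mp (Finset.sortedLT_sort G)
    refine hs.imp_of_mem ?_
    intro a b ha hb hab
    exact hgap a ((Finset.mem_sort _).mp ha) b ((Finset.mem_sort _).mp hb) hab
  have hpairE : E.Pairwise (fun a b => b + 3 ≤ a) := by
    rw [hE, List.pairwise_map]
    exact hpairR.imp (by intro a b h; omega)
  have hgeE : ∀ e ∈ E, t + 2 ≤ e := by
    intro e he
    rw [hE, List.mem_map] at he
    obtain ⟨f, hf, rfl⟩ := he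
    exact hct f (hmemR f hf)
  have hEflat : E.flatMap nuPow = R.flatMap (fun f => nuPow (f + c)) := by
    rw [hE, List.flatMap_map]
  obtain ⟨m, hpre⟩ := word_prefix_wrap E t hpairE hgeE
  set W : List (Fin 3) := E.flatMap nuPow ++ nuPow t with hW
  have hlen : W.length = (∑ f ∈ G, nara (f + c)) + nara t := by
    rw [hW, List.length_append, hEflat, flatMap_length, nuPow_len]
    congr 1
    have : (R.map fun f => (nuPow (f + c)).length) = R.map fun f => nara (f + c) := by
      apply List.map_congr_left; intro f _; rw [nuPow_len]
    rw [this, hR, sort_rev_sum]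
  have hcountW : W.countP p = j := by
    rw [hW, List.countP_append, hEflat, flatMap_countP, hR, sort_rev_sum, hcnt]
  have hnt : 1 ≤ (nuPow t).length := by rw [nuPow_len]; have := nara_ge t; omega
  have hlen1 : 1 ≤ W.length := by rw [hlen, nuPow_len] at *; omega
  have hlastW : p (W.getD (W.length - 1) 0) = true := by
    rw [hW, List.getD_eq_getElem _ _ (by simp only [List.length_append]; omega)]
    rw [List.getElem_append_right (by simp only [List.length_append]; omega)]
    rw [List.getD_eq_getElem _ _ (by omega)] at hlast
    have hidx : (E.flatMap nuPow ++ nuPow t).length - 1 - (E.flatMap nuPow).length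
        = (nuPow t).length - 1 := by
      simp only [List.length_append]; omega
    simp only [hidx]
    exact hlast
  have := main_occ p W m j hpre hlen1 hcountW hlastW
  rwa [hlen] at this

lemma occPos_congr {P Q : ℕ → Prop} (h : ∀ y, P y ↔ Q y) {j x : ℕ} (hq : OccPos Q j x) :
    OccPos P j x := by
  obtain ⟨h1, h2, h3⟩ := hq
  refine ⟨h1, (h x).mpr h2, ?_⟩
  have : {y | 1 ≤ y ∧ y ≤ x ∧ P y} = {y | 1 ≤ y ∧ y ≤ x ∧ Q y} := by
    ext y; simp only [Set.mem_setOf_eq, h y]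
  rw [this]; exact h3


theorem positions_of_symbols (j : ℕ) (hj : 1 ≤ j) (F : Finset ℕ) (hF : NaraRep F (j - 1)) :
    OccPos (fun y => nword (y - 1) = 0 ∨ nword (y - 1) = 2) j ((∑ f ∈ F, nara (f + 1)) + 1) ∧
    OccPos (fun y => nword (y - 1) = 0) j ((∑ f ∈ F, nara (f + 2)) + 1) ∧
    OccPos (fun y => nword (y - 1) = 1) j ((∑ f ∈ F, nara (f + 3)) + 2) ∧
    (∑ f ∈ F, nara (f + 3)) + 2 = ((∑ f ∈ F, nara (f + 2)) + 1) + j ∧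
    OccPos (fun y => nword (y - 1) = 2) j ((∑ f ∈ F, nara (f + 4)) + 3) ∧
    (∑ f ∈ F, nara (f + 4)) + 3 =
      (((∑ f ∈ F, nara (f + 3)) + 2) + ((∑ f ∈ F, nara (f + 1)) + 1)) := by
  obtain ⟨hsum, hgap⟩ := hF
  have hsum' : (∑ f ∈ F, nara f) + 1 = j := by omega
  refine ⟨?_, ?_, ?_, ?_, ?_, ?_⟩
  · -- p02
    by_cases h0 : (0 : ℕ) ∈ F
    · have hG : ∑ f ∈ F.erase 0, nara f + nara 0 = ∑ f ∈ F, nara f := by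
        rw [add_comm]; exact Finset.add_sum_erase F nara h0
      have hG1 : ∑ f ∈ F.erase 0, nara (f + 1) + nara (0 + 1) = ∑ f ∈ F, nara (f + 1) := by
        rw [add_comm]; exact Finset.add_sum_erase F (fun f => nara (f + 1)) h0
      have hmain := case_builder (F.erase 0)
        (fun a ha b hb hab => hgap a (Finset.mem_of_mem_erase ha) b (Finset.mem_of_mem_erase hb) hab)
        1 2
        (by
          intro f hf
          have hf0 : f ≠ 0 := Finset.ne_of_mem_erase hf
          have := hgap 0 h0 f (Finset.mem_of_mem_erase hf) (by omega)
          omega)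
        p02 j
        (by
          have : ∑ f ∈ F.erase 0, (nuPow (f + 1)).countP p02 = ∑ f ∈ F.erase 0, nara f :=
            Finset.sum_congr rfl (fun f _ => count02_nuPow f)
          rw [this]
          have h2 : (nuPow 2).countP p02 = 2 := by decide
          rw [h2]
          simp only [nara] at hG
          omega)
        (by decide)
      have hx : (∑ f ∈ F.erase 0, nara (f + 1)) + nara 2 = (∑ f ∈ F, nara (f + 1)) + 1 := by
        simp only [nara] at hG1 ⊢
        omega
      rw [hx] at hmain
      refine occPos_congr ?_ hmain
      intro y
      simp [p02]
    · have hmain := case_builder F hgap 1 0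
        (by
          intro f hf
          have : f ≠ 0 := fun h => h0 (h ▸ hf)
          omega)
        p02 j
        (by
          have : ∑ f ∈ F, (nuPow (f + 1)).countP p02 = ∑ f ∈ F, nara f :=
            Finset.sum_congr rfl (fun f _ => count02_nuPow f)
          rw [this]
          have h2 : (nuPow 0).countP p02 = 1 := by decide
          omega)
        (by decide)
      have hx : (∑ f ∈ F, nara (f + 1)) + nara 0 = (∑ f ∈ F, nara (f + 1)) + 1 := rfl
      rw [hx] at hmain
      refine occPos_congr ?_ hmain
      intro y
      simp [p02]
  · -- p0
    have hmain := case_builder F hgap 2 0 (fun f _ => by omega) (· == (0 : Fin 3)) j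
      (by
        have : ∑ f ∈ F, (nuPow (f + 2)).countP (· == (0 : Fin 3)) = ∑ f ∈ F, nara f :=
          Finset.sum_congr rfl (fun f _ => count0_nuPow f)
        rw [this]
        have h2 : (nuPow 0).countP (· == (0 : Fin 3)) = 1 := by decide
        omega)
      (by decide)
    have hx : (∑ f ∈ F, nara (f + 2)) + nara 0 = (∑ f ∈ F, nara (f + 2)) + 1 := rfl
    rw [hx] at hmain
    exact occPos_congr (fun y => by simp) hmain
  · -- p1
    have hmain := case_builder F hgap 3 1 (fun f _ => by omega) (· == (1 : Fin 3)) j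
      (by
        have : ∑ f ∈ F, (nuPow (f + 3)).countP (· == (1 : Fin 3)) = ∑ f ∈ F, nara f :=
          Finset.sum_congr rfl (fun f _ => count1_nuPow f)
        rw [this]
        have h2 : (nuPow 1).countP (· == (1 : Fin 3)) = 1 := by decide
        omega)
      (by decide)
    have hx : (∑ f ∈ F, nara (f + 3)) + nara 1 = (∑ f ∈ F, nara (f + 3)) + 2 := rfl
    rw [hx] at hmain
    exact occPos_congr (fun y => by simp) hmain
  · -- arithmetic 1
    have h3 : ∑ f ∈ F, nara (f + 3) = ∑ f ∈ F, (nara (f + 2) + nara f) :=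
      Finset.sum_congr rfl (fun f _ => rfl)
    rw [h3, Finset.sum_add_distrib]
    omega
  · -- p2
    have hmain := case_builder F hgap 4 2 (fun f _ => by omega) (· == (2 : Fin 3)) j
      (by
        have : ∑ f ∈ F, (nuPow (f + 4)).countP (· == (2 : Fin 3)) = ∑ f ∈ F, nara f :=
          Finset.sum_congr rfl (fun f _ => count2_nuPow f)
        rw [this]
        have h2 : (nuPow 2).countP (· == (2 : Fin 3)) = 1 := by decide
        omega)
      (by decide)
    have hx : (∑ f ∈ F, nara (f + 4)) + nara 2 = (∑ f ∈ F, nara (f + 4)) + 3 := rfl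
    rw [hx] at hmain
    exact occPos_congr (fun y => by simp) hmain
  · -- arithmetic 2
    have h4 : ∑ f ∈ F, nara (f + 4) = ∑ f ∈ F, (nara (f + 3) + nara (f + 1)) :=
      Finset.sum_congr rfl (fun f _ => rfl)
    rw [h4, Finset.sum_add_distrib]
    omega
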